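/- Under the mixture model with coordinate-wise independent sources, for any two observation indices l ≠ n, the second moment of the correlation satisfies E[(Σ_{k=1}^D a_l(k) a_n(k))²] = Σ_{k=1}^D Σ_{i=1}^J Σ_{j=1}^J p_i(l) p_j(n) E[h_i(k)² h_j(k)²] + D(D−1) (Σ_{j=1}^J p_j(l) p_j(n))². -/

import Mathlib

open MeasureTheory ProbabilityTheory

lemma abs_mul4_le (a b c d : ℝ) : |a*b*c*d| ≤ |a|^4+|b|^4+|c|^4+|d|^4 := by
  rw [abs_mul, abs_mul, abs_mul]
  set A := |a|; set B := |b|; set C := |c|; set D := |d|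
  have hA : 0 ≤ A := abs_nonneg a
  have hB : 0 ≤ B := abs_nonneg b
  have hC : 0 ≤ C := abs_nonneg c
  have hD : 0 ≤ D := abs_nonneg d
  nlinarith [sq_nonneg (A*B - C*D), sq_nonneg (A^2-B^2), sq_nonneg (C^2-D^2),
    sq_nonneg (A*B+C*D), mul_nonneg hA hB, mul_nonneg hC hD, sq_nonneg (A-B), sq_nonneg (C-D)]

lemma abs_mul2_le (a b : ℝ) : |a*b| ≤ |a|^2+|b|^2 := by
  rw [abs_mul]; nlinarith [sq_nonneg (|a|-|b|), abs_nonneg a, abs_nonneg b]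

lemma abs_sq_mul_sq_le (a b : ℝ) : |a^2*b^2| ≤ |a|^4+|b|^4 := by
  rw [abs_mul, abs_pow, abs_pow]
  nlinarith [sq_nonneg (|a|^2-|b|^2), abs_nonneg a, abs_nonneg b]

/-- integrability from a bound by 1 on a probability space -/
lemma integrable_of_le_one {Ω : Type*} [MeasurableSpace Ω] {μ : Measure Ω}
    [IsProbabilityMeasure μ] {f : Ω → ℝ} (hf : Measurable f) (hb : ∀ ω, |f ω| ≤ 1) :
    Integrable f μ :=
  (integrable_const 1).mono' hf.aestronglyMeasurable (ae_of_all _ hb)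

/-- Second moment of the (unnormalized) correlation for `l ≠ n`. -/
theorem second_moment_correlation
    {Ω : Type*} [MeasurableSpace Ω] (μ : Measure Ω) [IsProbabilityMeasure μ]
    (J L D : ℕ) (hJ : 0 < J) (hL : 0 < L) (hD : 0 < D)
    -- hidden sources
    (h : Fin J → Fin D → Ω → ℝ)
    (hmeas : ∀ j k, Measurable (h j k))
    -- all moments of the sources are finite
    (hmom : ∀ j k (n : ℕ), Integrable (fun ω => |h j k ω| ^ n) μ)
    -- second-moment structure: E[h_i(k) h_j(k')] = δ_{ij} δ_{kk'}
    (hcorr : ∀ (i j : Fin J) (k k' : Fin D),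
      ∫ ω, h i k ω * h j k' ω ∂μ = if i = j ∧ k = k' then 1 else 0)
    -- indicators
    (I : Fin J → Fin L → Fin D → Ω → ℝ)
    (hImeas : ∀ j l k, Measurable (I j l k))
    (hI01 : ∀ j l k ω, I j l k ω = 0 ∨ I j l k ω = 1)
    (hIsum : ∀ l k ω, ∑ j, I j l k ω = 1)
    -- probabilities
    (p : Fin J → Fin L → ℝ)
    (hp0 : ∀ j l, 0 ≤ p j l) (hp1 : ∀ l, ∑ j, p j l = 1)
    (hEI : ∀ j l k, ∫ ω, I j l k ω ∂μ = p j l)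
    -- the indicator families associated with distinct pairs (l,k) are mutually independent
    (hIndepI : iIndepFun
      (fun (lk : Fin L × Fin D) ω => fun j => I j lk.1 lk.2 ω) μ)
    -- the collection of all indicators is independent of the collection of all sources
    (hIndepIh : IndepFun
      (fun ω => fun jlk : Fin J × Fin L × Fin D => I jlk.1 jlk.2.1 jlk.2.2 ω)
      (fun ω => fun jk : Fin J × Fin D => h jk.1 jk.2 ω) μ)
    -- observations
    (a : Fin L → Fin D → Ω → ℝ)
    (ha : ∀ l k ω, a l k ω = ∑ j, I j l k ω * h j k ω)
    -- coordinate-wise independence of the sources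
    (hIndeph : iIndepFun
      (fun (k : Fin D) ω => fun j => h j k ω) μ) :
    ∀ l n : Fin L, l ≠ n →
      ∫ ω, (∑ k, a l k ω * a n k ω) ^ 2 ∂μ =
        (∑ k, ∑ i, ∑ j, p i l * p j n * ∫ ω, (h i k ω) ^ 2 * (h j k ω) ^ 2 ∂μ)
          + (D : ℝ) * ((D : ℝ) - 1) * (∑ j, p j l * p j n) ^ 2 := by
  intro l n hln
  -- basic facts about indicators
  have hIabs : ∀ j l k ω, |I j l k ω| ≤ 1 := by
    intro j l k ω; rcases hI01 j l k ω with h0 | h1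
    · simp [h0]
    · simp [h1]
  have hInonneg : ∀ j l k ω, 0 ≤ I j l k ω := by
    intro j l k ω; rcases hI01 j l k ω with h0 | h1
    · simp [h0]
    · simp [h1]
  -- indicator product collapse
  have hIcol : ∀ (i i' : Fin J) (l₀ : Fin L) (k : Fin D) (ω : Ω),
      I i l₀ k ω * I i' l₀ k ω = if i = i' then I i l₀ k ω else 0 := by
    intro i i' l₀ k ω
    by_cases hii : i = i'
    · subst hii
      rcases hI01 i l₀ k ω with h0 | h1
      · simp [h0]
      · simp [h1]
    · simp only [hii, if_false]
      rcases hI01 i l₀ k ω with h0 | h1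
      · simp [h0]
      rcases hI01 i' l₀ k ω with h0' | h1'
      · simp [h0']
      · exfalso
        have hsub : ({i, i'} : Finset (Fin J)) ⊆ Finset.univ := Finset.subset_univ _
        have h2 : ∑ j ∈ ({i, i'} : Finset (Fin J)), I j l₀ k ω
            ≤ ∑ j, I j l₀ k ω := by
          exact Finset.sum_le_sum_of_subset_of_nonneg hsub
            (fun j _ _ => hInonneg j l₀ k ω)
        rw [Finset.sum_pair hii, h1, h1', hIsum l₀ k ω] at h2
        norm_num at h2
  -- integrability of products of sources
  have hInt_hh : ∀ (i j : Fin J) (k k' : Fin D),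
      Integrable (fun ω => h i k ω * h j k' ω) μ := by
    intro i j k k'
    refine ((hmom i k 2).add (hmom j k' 2)).mono'
      ((hmeas i k).mul (hmeas j k')).aestronglyMeasurable (ae_of_all _ fun ω => ?_)
    simp only [Pi.add_apply, Real.norm_eq_abs]
    exact abs_mul2_le (h i k ω) (h j k' ω)
  have hInt_h4 : ∀ (i j i' j' : Fin J) (k k' : Fin D),
      Integrable (fun ω => h i k ω * h j k ω * h i' k' ω * h j' k' ω) μ := by
    intro i j i' j' k k'
    refine (((hmom i k 4).add (hmom j k 4)).add ((hmom i' k' 4).add (hmom j' k' 4))).mono'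
      ((((hmeas i k).mul (hmeas j k)).mul (hmeas i' k')).mul (hmeas j' k')).aestronglyMeasurable
      (ae_of_all _ fun ω => ?_)
    have := abs_mul4_le (h i k ω) (h j k ω) (h i' k' ω) (h j' k' ω)
    simp only [Pi.add_apply, Real.norm_eq_abs]
    linarith
  have hInt_h22 : ∀ (i j : Fin J) (k : Fin D),
      Integrable (fun ω => h i k ω ^ 2 * h j k ω ^ 2) μ := by
    intro i j k
    refine ((hmom i k 4).add (hmom j k 4)).mono'
      (((hmeas i k).pow_const 2).mul ((hmeas j k).pow_const 2)).aestronglyMeasurable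
      (ae_of_all _ fun ω => ?_)
    simp only [Pi.add_apply, Real.norm_eq_abs]
    exact abs_sq_mul_sq_le (h i k ω) (h j k ω)
  -- integrability of products of indicators
  have hInt_I : ∀ (j : Fin J) (l₀ : Fin L) (k : Fin D),
      Integrable (fun ω => I j l₀ k ω) μ := fun j l₀ k =>
    integrable_of_le_one (hImeas j l₀ k) (hIabs j l₀ k)
  have hInt_II : ∀ (i j : Fin J) (k : Fin D),
      Integrable (fun ω => I i l k ω * I j n k ω) μ := by
    intro i j k
    refine integrable_of_le_one ((hImeas i l k).mul (hImeas j n k)) fun ω => ?_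
    rw [abs_mul]
    exact mul_le_one₀ (hIabs i l k ω) (abs_nonneg _) (hIabs j n k ω)
  have hInt_I4 : ∀ (i j i' j' : Fin J) (k k' : Fin D),
      Integrable (fun ω => I i l k ω * I j n k ω * (I i' l k' ω * I j' n k' ω)) μ := by
    intro i j i' j' k k'
    refine integrable_of_le_one (((hImeas i l k).mul (hImeas j n k)).mul
      ((hImeas i' l k').mul (hImeas j' n k'))) fun ω => ?_
    rw [abs_mul, abs_mul, abs_mul]
    exact mul_le_one₀ (mul_le_one₀ (hIabs i l k ω) (abs_nonneg _) (hIabs j n k ω))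
      (mul_nonneg (abs_nonneg _) (abs_nonneg _))
      (mul_le_one₀ (hIabs i' l k' ω) (abs_nonneg _) (hIabs j' n k' ω))
  -- measurability of the vector-valued families
  have hmeasVecI : ∀ lk : Fin L × Fin D,
      Measurable (fun ω => fun j => I j lk.1 lk.2 ω) := fun lk =>
    measurable_pi_iff.mpr fun j => hImeas j lk.1 lk.2
  have hmeasVech : ∀ k : Fin D,
      Measurable (fun ω => fun j => h j k ω) := fun k =>
    measurable_pi_iff.mpr fun j => hmeas j k
  -- expectation of a product of two indicators at observation indices l ≠ n
  have hEII : ∀ (i j : Fin J) (k : Fin D),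
      ∫ ω, I i l k ω * I j n k ω ∂μ = p i l * p j n := by
    intro i j k
    have hne : ((l, k) : Fin L × Fin D) ≠ (n, k) := by
      simp [Prod.ext_iff, hln]
    have hind : IndepFun (fun ω => I i l k ω) (fun ω => I j n k ω) μ :=
      (hIndepI.indepFun hne).comp (measurable_pi_apply i) (measurable_pi_apply j)
    have := hind.integral_fun_mul_eq_mul_integral (hInt_I i l k).aestronglyMeasurable (hInt_I j n k).aestronglyMeasurable
    rw [hEI, hEI] at this
    exact this
  -- expectation of four indicators at distinct coordinates
  have hE4I : ∀ (i j i' j' : Fin J) (k k' : Fin D), k ≠ k' →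
      ∫ ω, I i l k ω * I j n k ω * (I i' l k' ω * I j' n k' ω) ∂μ
        = p i l * p j n * (p i' l * p j' n) := by
    intro i j i' j' k k' hkk'
    have hpair : IndepFun
        (fun ω => ((fun j => I j l k ω), (fun j => I j n k ω)))
        (fun ω => ((fun j => I j l k' ω), (fun j => I j n k' ω))) μ := by
      exact hIndepI.indepFun_prodMk_prodMk hmeasVecI (l, k) (n, k) (l, k') (n, k')
        (by simp [Prod.ext_iff, hkk']) (by simp [Prod.ext_iff, hkk'])
        (by simp [Prod.ext_iff, hkk']) (by simp [Prod.ext_iff, hkk'])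
    have hind : IndepFun (fun ω => I i l k ω * I j n k ω)
        (fun ω => I i' l k' ω * I j' n k' ω) μ := by
      exact hpair.comp
        (((measurable_pi_apply i).comp measurable_fst).mul
          ((measurable_pi_apply j).comp measurable_snd))
        (((measurable_pi_apply i').comp measurable_fst).mul
          ((measurable_pi_apply j').comp measurable_snd))
    have := hind.integral_fun_mul_eq_mul_integral (hInt_II i j k).aestronglyMeasurable (hInt_II i' j' k').aestronglyMeasurable
    rw [hEII, hEII] at this
    exact this
  -- expectation of four sources at two distinct coordinates
  have hE4h : ∀ (i j i' j' : Fin J) (k k' : Fin D), k ≠ k' →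
      ∫ ω, h i k ω * h j k ω * (h i' k' ω * h j' k' ω) ∂μ
        = (if i = j then (1:ℝ) else 0) * (if i' = j' then (1:ℝ) else 0) := by
    intro i j i' j' k k' hkk'
    have hind : IndepFun (fun ω => h i k ω * h j k ω)
        (fun ω => h i' k' ω * h j' k' ω) μ := by
      exact (hIndeph.indepFun hkk').comp
        ((measurable_pi_apply i).mul (measurable_pi_apply j))
        ((measurable_pi_apply i').mul (measurable_pi_apply j'))
    have := hind.integral_fun_mul_eq_mul_integral (hInt_hh i j k k).aestronglyMeasurable (hInt_hh i' j' k' k').aestronglyMeasurable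
    rw [hcorr, hcorr] at this
    simpa using this
  -- independence of indicator functionals from source functionals
  have hSplit : ∀ (F : (Fin J × Fin L × Fin D → ℝ) → ℝ) (G : (Fin J × Fin D → ℝ) → ℝ),
      Measurable F → Measurable G →
      IndepFun (fun ω => F (fun jlk => I jlk.1 jlk.2.1 jlk.2.2 ω))
        (fun ω => G (fun jk => h jk.1 jk.2 ω)) μ := by
    intro F G hF hG
    exact hIndepIh.comp hF hG
  set S : ℝ := ∑ j, p j l * p j n with hS
  -- pointwise expansion of the generic product
  have eA : ∀ (k0 : Fin D) (ω : Ω), a l k0 ω * a n k0 ω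
      = ∑ i, ∑ j, (I i l k0 ω * h i k0 ω) * (I j n k0 ω * h j k0 ω) := by
    intro k0 ω
    rw [ha, ha, Finset.sum_mul_sum]
  have hexp : ∀ (k k' : Fin D) (ω : Ω),
      (a l k ω * a n k ω) * (a l k' ω * a n k' ω)
        = ∑ i, ∑ i', ∑ j, ∑ j',
            (I i l k ω * I j n k ω * (I i' l k' ω * I j' n k' ω))
              * (h i k ω * h j k ω * (h i' k' ω * h j' k' ω)) := by
    intro k k' ω
    rw [eA k, eA k', Finset.sum_mul_sum]
    refine Finset.sum_congr rfl fun i _ => ?_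
    refine Finset.sum_congr rfl fun i' _ => ?_
    rw [Finset.sum_mul_sum]
    refine Finset.sum_congr rfl fun j _ => ?_
    refine Finset.sum_congr rfl fun j' _ => ?_
    ring
  -- integrability of a generic term
  have hIntT : ∀ (i j i' j' : Fin J) (k k' : Fin D),
      Integrable (fun ω =>
        (I i l k ω * I j n k ω * (I i' l k' ω * I j' n k' ω))
          * (h i k ω * h j k ω * (h i' k' ω * h j' k' ω))) μ := by
    intro i j i' j' k k'
    have h4 : Integrable (fun ω => h i k ω * h j k ω * (h i' k' ω * h j' k' ω)) μ :=
      (hInt_h4 i j i' j' k k').congr (ae_of_all _ fun ω => by ring)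
    refine h4.bdd_mul (c := 1) ?_ (ae_of_all _ fun ω => ?_)
    · exact (((hImeas i l k).mul (hImeas j n k)).mul
        ((hImeas i' l k').mul (hImeas j' n k'))).aestronglyMeasurable
    · simp only [Real.norm_eq_abs, abs_mul]
      exact mul_le_one₀ (mul_le_one₀ (hIabs i l k ω) (abs_nonneg _) (hIabs j n k ω))
        (mul_nonneg (abs_nonneg _) (abs_nonneg _))
        (mul_le_one₀ (hIabs i' l k' ω) (abs_nonneg _) (hIabs j' n k' ω))
  have hIntG : ∀ (k k' : Fin D),
      Integrable (fun ω => (a l k ω * a n k ω) * (a l k' ω * a n k' ω)) μ := by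
    intro k k'
    have heq : (fun ω => (a l k ω * a n k ω) * (a l k' ω * a n k' ω))
        = fun ω => ∑ i, ∑ i', ∑ j, ∑ j',
            (I i l k ω * I j n k ω * (I i' l k' ω * I j' n k' ω))
              * (h i k ω * h j k ω * (h i' k' ω * h j' k' ω)) := funext (hexp k k')
    rw [heq]
    exact integrable_finset_sum _ fun i _ => integrable_finset_sum _ fun i' _ =>
      integrable_finset_sum _ fun j _ => integrable_finset_sum _ fun j' _ =>
        hIntT i j i' j' k k'
  -- expectation of a generic term splits into indicator and source parts
  have hToff : ∀ (i j i' j' : Fin J) (k k' : Fin D), k ≠ k' →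
      ∫ ω, (I i l k ω * I j n k ω * (I i' l k' ω * I j' n k' ω))
          * (h i k ω * h j k ω * (h i' k' ω * h j' k' ω)) ∂μ
        = (p i l * p j n * (p i' l * p j' n))
            * ((if i = j then (1:ℝ) else 0) * (if i' = j' then (1:ℝ) else 0)) := by
    intro i j i' j' k k' hkk'
    have hF : Measurable (fun f : Fin J × Fin L × Fin D → ℝ =>
        f (i, l, k) * f (j, n, k) * (f (i', l, k') * f (j', n, k'))) :=
      ((measurable_pi_apply (i, l, k)).mul (measurable_pi_apply (j, n, k))).mul
        ((measurable_pi_apply (i', l, k')).mul (measurable_pi_apply (j', n, k')))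
    have hG : Measurable (fun g : Fin J × Fin D → ℝ =>
        g (i, k) * g (j, k) * (g (i', k') * g (j', k'))) :=
      ((measurable_pi_apply (i, k)).mul (measurable_pi_apply (j, k))).mul
        ((measurable_pi_apply (i', k')).mul (measurable_pi_apply (j', k')))
    have hind := hSplit _ _ hF hG
    have h4 : Integrable (fun ω => h i k ω * h j k ω * (h i' k' ω * h j' k' ω)) μ :=
      (hInt_h4 i j i' j' k k').congr (ae_of_all _ fun ω => by ring)
    have := hind.integral_fun_mul_eq_mul_integral (hInt_I4 i j i' j' k k').aestronglyMeasurable h4.aestronglyMeasurable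
    rw [hE4I i j i' j' k k' hkk', hE4h i j i' j' k k' hkk'] at this
    exact this
  -- the off-diagonal integral
  have hoff : ∀ (k k' : Fin D), k ≠ k' →
      ∫ ω, (a l k ω * a n k ω) * (a l k' ω * a n k' ω) ∂μ = S ^ 2 := by
    intro k k' hkk'
    have h1 : ∫ ω, (a l k ω * a n k ω) * (a l k' ω * a n k' ω) ∂μ
        = ∑ i, ∑ i', ∑ j, ∑ j', (p i l * p j n * (p i' l * p j' n))
            * ((if i = j then (1:ℝ) else 0) * (if i' = j' then (1:ℝ) else 0)) := by
      simp only [hexp k k']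
      rw [integral_finset_sum _ fun i _ => integrable_finset_sum _ fun i' _ =>
        integrable_finset_sum _ fun j _ => integrable_finset_sum _ fun j' _ =>
          hIntT i j i' j' k k']
      refine Finset.sum_congr rfl fun i _ => ?_
      rw [integral_finset_sum _ fun i' _ => integrable_finset_sum _ fun j _ =>
        integrable_finset_sum _ fun j' _ => hIntT i j i' j' k k']
      refine Finset.sum_congr rfl fun i' _ => ?_
      rw [integral_finset_sum _ fun j _ => integrable_finset_sum _ fun j' _ =>
        hIntT i j i' j' k k']
      refine Finset.sum_congr rfl fun j _ => ?_
      rw [integral_finset_sum _ fun j' _ => hIntT i j i' j' k k']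
      exact Finset.sum_congr rfl fun j' _ => hToff i j i' j' k k' hkk'
    rw [h1]
    simp only [mul_ite, mul_one, mul_zero, ite_mul, zero_mul, one_mul,
      Finset.sum_ite_eq, Finset.mem_univ, if_true]
    rw [sq, Finset.sum_mul_sum]
  -- the diagonal integral
  have hsq : ∀ (l₀ : Fin L) (k : Fin D) (ω : Ω),
      a l₀ k ω * a l₀ k ω = ∑ i, I i l₀ k ω * (h i k ω * h i k ω) := by
    intro l₀ k ω
    rw [ha, Finset.sum_mul_sum]
    refine Finset.sum_congr rfl fun i _ => ?_
    calc ∑ i', (I i l₀ k ω * h i k ω) * (I i' l₀ k ω * h i' k ω)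
        = ∑ i', if i = i' then I i l₀ k ω * (h i k ω * h i' k ω) else 0 := by
          refine Finset.sum_congr rfl fun i' _ => ?_
          rw [show (I i l₀ k ω * h i k ω) * (I i' l₀ k ω * h i' k ω)
              = (I i l₀ k ω * I i' l₀ k ω) * (h i k ω * h i' k ω) by ring, hIcol,
            ite_mul, zero_mul]
      _ = I i l₀ k ω * (h i k ω * h i k ω) := by
          rw [Finset.sum_ite_eq]
          simp
  have hdiag : ∀ k : Fin D, ∫ ω, (a l k ω * a n k ω) * (a l k ω * a n k ω) ∂μ
      = ∑ i, ∑ j, p i l * p j n * ∫ ω, h i k ω ^ 2 * h j k ω ^ 2 ∂μ := by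
    intro k
    have hpt : ∀ ω : Ω, (a l k ω * a n k ω) * (a l k ω * a n k ω)
        = ∑ i, ∑ j, (I i l k ω * I j n k ω) * (h i k ω ^ 2 * h j k ω ^ 2) := by
      intro ω
      have e0 : (a l k ω * a n k ω) * (a l k ω * a n k ω)
          = (a l k ω * a l k ω) * (a n k ω * a n k ω) := by ring
      rw [e0, hsq l k ω, hsq n k ω, Finset.sum_mul_sum]
      exact Finset.sum_congr rfl fun i _ => Finset.sum_congr rfl fun j _ => by ring
    have hIntTk : ∀ i j : Fin J, Integrable (fun ω =>
        (I i l k ω * I j n k ω) * (h i k ω ^ 2 * h j k ω ^ 2)) μ := by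
      intro i j
      refine (hInt_h22 i j k).bdd_mul
        ((hImeas i l k).mul (hImeas j n k)).aestronglyMeasurable (c := 1) (ae_of_all _ fun ω => ?_)
      simp only [Real.norm_eq_abs, abs_mul]
      exact mul_le_one₀ (hIabs i l k ω) (abs_nonneg _) (hIabs j n k ω)
    simp only [hpt]
    rw [integral_finset_sum _ fun i _ => integrable_finset_sum _ fun j _ => hIntTk i j]
    refine Finset.sum_congr rfl fun i _ => ?_
    rw [integral_finset_sum _ fun j _ => hIntTk i j]
    refine Finset.sum_congr rfl fun j _ => ?_
    have hF : Measurable (fun f : Fin J × Fin L × Fin D → ℝ => f (i, l, k) * f (j, n, k)) :=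
      (measurable_pi_apply (i, l, k)).mul (measurable_pi_apply (j, n, k))
    have hG : Measurable (fun g : Fin J × Fin D → ℝ => g (i, k) ^ 2 * g (j, k) ^ 2) :=
      ((measurable_pi_apply (i, k)).pow_const 2).mul ((measurable_pi_apply (j, k)).pow_const 2)
    have hind := hSplit _ _ hF hG
    have := hind.integral_fun_mul_eq_mul_integral (hInt_II i j k).aestronglyMeasurable (hInt_h22 i j k).aestronglyMeasurable
    rw [hEII i j k] at this
    exact this
  -- assembly
  have hmain : ∀ ω : Ω, (∑ k, a l k ω * a n k ω) ^ 2
      = ∑ k, ∑ k', (a l k ω * a n k ω) * (a l k' ω * a n k' ω) := by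
    intro ω; rw [sq, Finset.sum_mul_sum]
  simp only [hmain]
  rw [integral_finset_sum _ fun k _ => integrable_finset_sum _ fun k' _ => hIntG k k']
  have hrow : ∀ k : Fin D, ∫ ω, ∑ k', (a l k ω * a n k ω) * (a l k' ω * a n k' ω) ∂μ
      = (∑ i, ∑ j, p i l * p j n * ∫ ω, h i k ω ^ 2 * h j k ω ^ 2 ∂μ)
        + ((D : ℝ) - 1) * S ^ 2 := by
    intro k
    rw [integral_finset_sum _ fun k' _ => hIntG k k']
    rw [← Finset.add_sum_erase Finset.univ _ (Finset.mem_univ k)]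
    congr 1
    · exact hdiag k
    · calc ∑ k' ∈ Finset.univ.erase k,
            ∫ ω, (a l k ω * a n k ω) * (a l k' ω * a n k' ω) ∂μ
          = ∑ _k' ∈ Finset.univ.erase k, S ^ 2 :=
            Finset.sum_congr rfl fun k' hk' =>
              hoff k k' (Finset.ne_of_mem_erase hk').symm
        _ = ((D : ℝ) - 1) * S ^ 2 := by
            rw [Finset.sum_const, Finset.card_erase_of_mem (Finset.mem_univ k),
              Finset.card_univ, Fintype.card_fin, nsmul_eq_mul, Nat.cast_sub hD,
              Nat.cast_one]
  simp only [hrow]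
  rw [Finset.sum_add_distrib, Finset.sum_const, Finset.card_univ, Fintype.card_fin,
    nsmul_eq_mul]
  ring
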